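/- arXiv:1811.07677 — 4 statements merged into one kernel-verified Lean document; each statement's English description precedes it below -/
import Mathlib

section
/- Let X and Y be q-independent real-valued random variables (i.e., |P(X ∈ A ∧ Y ∈ B) − P(X ∈ A)P(Y ∈ B)| ≤ q for all measurable A, B) with |X| ≤ a and |Y| ≤ b almost surely. Then |E[XY] − E[X]E[Y]| ≤ 4qab. -/
open MeasureTheory

/-- Two random variables are `q`-independent if for all measurable sets `A`, `B`,
`|P(X ∈ A ∧ Y ∈ B) − P(X ∈ A)·P(Y ∈ B)| ≤ q`. -/
def QIndep {Ω K K' : Type*} [MeasurableSpace Ω] [MeasurableSpace K] [MeasurableSpace K']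
    (μ : Measure Ω) (X : Ω → K) (Y : Ω → K') (q : ℝ) : Prop :=
  ∀ A B, MeasurableSet A → MeasurableSet B →
    |(μ (X ⁻¹' A ∩ Y ⁻¹' B)).toReal - (μ (X ⁻¹' A)).toReal * (μ (Y ⁻¹' B)).toReal| ≤ q

/-- Key lemma: if `|W| ≤ c` a.e., `W` is `m`-strongly measurable, and the integral of `Z`
over any `m`-measurable set is at most `r` in absolute value, then `|∫ W Z| ≤ 2 c r`. -/
lemma key_cov_bound {Ω : Type*} (m : MeasurableSpace Ω) {m0 : MeasurableSpace Ω} (hm : m ≤ m0)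
    (μ : Measure Ω) [IsProbabilityMeasure μ]
    (W Z : Ω → ℝ) (hW : StronglyMeasurable[m] W) {c r : ℝ}
    (hc : ∀ᵐ ω ∂μ, |W ω| ≤ c)
    (hZ : Integrable Z μ)
    (hWZ : Integrable (fun ω => W ω * Z ω) μ)
    (hr : ∀ A, MeasurableSet[m] A → |∫ ω in A, Z ω ∂μ| ≤ r) :
    |∫ ω, W ω * Z ω ∂μ| ≤ 2 * c * r := by
  have hc0 : 0 ≤ c := by
    obtain ⟨ω, hω⟩ := hc.exists
    exact le_trans (abs_nonneg _) hω
  set g : Ω → ℝ := μ[Z | m] with hgdef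
  have hgint : Integrable g μ := integrable_condExp
  have h1 : ∫ ω, W ω * Z ω ∂μ = ∫ ω, W ω * g ω ∂μ := by
    rw [← integral_condExp hm (f := fun ω => W ω * Z ω)]
    refine integral_congr_ae ?_
    have := condExp_mul_of_stronglyMeasurable_left hW hWZ hZ
    filter_upwards [this] with ω hω
    exact hω
  have hgm : Measurable[m] g := stronglyMeasurable_condExp.measurable
  set S : Set Ω := {ω | 0 ≤ g ω} with hSdef
  have hSm : MeasurableSet[m] S := hgm measurableSet_Ici
  have hSm0 : MeasurableSet[m0] S := hm S hSm
  have habs : ∫ ω, |g ω| ∂μ ≤ 2 * r := by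
    have hsplit : ∫ ω, |g ω| ∂μ = (∫ ω in S, |g ω| ∂μ) + ∫ ω in Sᶜ, |g ω| ∂μ :=
      (integral_add_compl hSm0 hgint.abs).symm
    have hS1 : ∫ ω in S, |g ω| ∂μ = ∫ ω in S, g ω ∂μ :=
      setIntegral_congr_fun hSm0 fun ω hω => abs_of_nonneg hω
    have hS2 : ∫ ω in Sᶜ, |g ω| ∂μ = - ∫ ω in Sᶜ, g ω ∂μ := by
      rw [← integral_neg]
      exact setIntegral_congr_fun hSm0.compl fun ω hω =>
        abs_of_neg (lt_of_not_ge hω)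
    have e1 : ∫ ω in S, g ω ∂μ = ∫ ω in S, Z ω ∂μ := setIntegral_condExp hm hZ hSm
    have e2 : ∫ ω in Sᶜ, g ω ∂μ = ∫ ω in Sᶜ, Z ω ∂μ := setIntegral_condExp hm hZ hSm.compl
    have b1 := hr S hSm
    have b2 := hr Sᶜ hSm.compl
    rw [hsplit, hS1, hS2, e1, e2]
    have := abs_le.mp b1
    have := abs_le.mp b2
    linarith [ (abs_le.mp b1).2, (abs_le.mp b2).1 ]
  calc |∫ ω, W ω * Z ω ∂μ| = ‖∫ ω, W ω * g ω ∂μ‖ := by rw [h1, Real.norm_eq_abs]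
    _ ≤ ∫ ω, c * |g ω| ∂μ := by
        refine norm_integral_le_of_norm_le (hgint.abs.const_mul c) ?_
        filter_upwards [hc] with ω hω
        rw [Real.norm_eq_abs, abs_mul]
        exact mul_le_mul_of_nonneg_right hω (abs_nonneg _)
    _ = c * ∫ ω, |g ω| ∂μ := integral_const_mul c _
    _ ≤ c * (2 * r) := mul_le_mul_of_nonneg_left habs hc0
    _ = 2 * c * r := by ring

theorem stmt0 {Ω : Type*} [MeasurableSpace Ω] (μ : Measure Ω) [IsProbabilityMeasure μ]
    (X Y : Ω → ℝ) (hX : Measurable X) (hY : Measurable Y)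
    (q a b : ℝ) (hq : QIndep μ X Y q)
    (ha : ∀ᵐ ω ∂μ, |X ω| ≤ a) (hb : ∀ᵐ ω ∂μ, |Y ω| ≤ b) :
    |(∫ ω, X ω * Y ω ∂μ) - (∫ ω, X ω ∂μ) * ∫ ω, Y ω ∂μ| ≤ 4 * q * a * b := by
  have hXint : Integrable X μ := by
    refine Integrable.mono' (integrable_const a) hX.aestronglyMeasurable ?_
    filter_upwards [ha] with ω hω; simpa [Real.norm_eq_abs] using hω
  have hYint : Integrable Y μ := by
    refine Integrable.mono' (integrable_const b) hY.aestronglyMeasurable ?_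
    filter_upwards [hb] with ω hω; simpa [Real.norm_eq_abs] using hω
  have ha0 : 0 ≤ a := le_trans (abs_nonneg _) ha.exists.choose_spec
  have hb0 : 0 ≤ b := le_trans (abs_nonneg _) hb.exists.choose_spec
  have hXYint : Integrable (fun ω => X ω * Y ω) μ := by
    refine Integrable.mono' (integrable_const (a * b)) (hX.mul hY).aestronglyMeasurable ?_
    filter_upwards [ha, hb] with ω h1 h2
    rw [Real.norm_eq_abs, abs_mul]
    exact mul_le_mul h1 h2 (abs_nonneg _) ha0
  set EY : ℝ := ∫ ω, Y ω ∂μ with hEY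
  -- inner bound
  have inner : ∀ A : Set Ω, MeasurableSet[MeasurableSpace.comap X inferInstance] A →
      |∫ ω in A, (Y ω - EY) ∂μ| ≤ 2 * b * q := by
    rintro A ⟨A', hA', rfl⟩
    set S : Set Ω := X ⁻¹' A' with hSdef
    have hS : MeasurableSet S := hX hA'
    set p : ℝ := (μ S).toReal with hp
    set Z' : Ω → ℝ := fun ω => S.indicator (fun _ => (1:ℝ)) ω - p with hZ'
    have hZ'int : Integrable Z' μ :=
      ((integrable_const (1:ℝ)).indicator hS).sub (integrable_const p)
    have hYZ' : Integrable (fun ω => Y ω * Z' ω) μ := by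
      have : (fun ω => Y ω * Z' ω) = fun ω => S.indicator Y ω - p * Y ω := by
        funext ω
        by_cases hω : ω ∈ S <;> simp [hZ', Set.indicator_of_mem, Set.indicator_of_notMem, hω] <;> ring
      rw [this]
      exact (hYint.indicator hS).sub (hYint.const_mul p)
    have hr' : ∀ B, MeasurableSet[MeasurableSpace.comap Y inferInstance] B →
        |∫ ω in B, Z' ω ∂μ| ≤ q := by
      rintro B ⟨B', hB', rfl⟩
      have hB : MeasurableSet (Y ⁻¹' B') := hY hB'
      have hint : ∫ ω in Y ⁻¹' B', Z' ω ∂μ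
          = (μ (S ∩ Y ⁻¹' B')).toReal - (μ (Y ⁻¹' B')).toReal * p := by
        rw [hZ', integral_sub (((integrable_const (1:ℝ)).indicator hS).restrict)
          ((integrable_const p).restrict)]
        rw [setIntegral_indicator hS]
        simp [Set.inter_comm, mul_comm, Measure.real]
      rw [hint]
      have := hq A' B' hA' hB'
      rw [Set.inter_comm] at hint
      calc |(μ (S ∩ Y ⁻¹' B')).toReal - (μ (Y ⁻¹' B')).toReal * p|
          = |(μ (X ⁻¹' A' ∩ Y ⁻¹' B')).toReal
              - (μ (X ⁻¹' A')).toReal * (μ (Y ⁻¹' B')).toReal| := by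
            rw [hp, hSdef]; ring_nf
        _ ≤ q := hq A' B' hA' hB'
    have hkey := key_cov_bound (MeasurableSpace.comap Y inferInstance) hY.comap_le μ
      Y Z' (Measurable.of_comap_le le_rfl).stronglyMeasurable hb hZ'int hYZ' hr'
    have heq : ∫ ω, Y ω * Z' ω ∂μ = ∫ ω in S, (Y ω - EY) ∂μ := by
      have e1 : ∫ ω, Y ω * Z' ω ∂μ = (∫ ω in S, Y ω ∂μ) - p * EY := by
        have : (fun ω => Y ω * Z' ω) = fun ω => S.indicator Y ω - p * Y ω := by
          funext ω
          by_cases hω : ω ∈ S <;> simp [hZ', Set.indicator_of_mem, Set.indicator_of_notMem, hω] <;> ring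
        rw [this, integral_sub (hYint.indicator hS) (hYint.const_mul p),
          integral_indicator hS, integral_const_mul]
      have e2 : ∫ ω in S, (Y ω - EY) ∂μ = (∫ ω in S, Y ω ∂μ) - p * EY := by
        rw [integral_sub hYint.restrict (integrable_const EY).restrict]
        simp [hp, smul_eq_mul, Measure.real]
      rw [e1, e2]
    rw [heq] at hkey
    exact hkey
  -- outer application
  have houter := key_cov_bound (MeasurableSpace.comap X inferInstance) hX.comap_le μ
    X (fun ω => Y ω - EY) (Measurable.of_comap_le le_rfl).stronglyMeasurable ha
    (hYint.sub (integrable_const EY))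
    (by
      have : (fun ω => X ω * (Y ω - EY)) = fun ω => X ω * Y ω - EY * X ω := by
        funext ω; ring
      rw [this]
      exact hXYint.sub (hXint.const_mul EY))
    inner
  have hfinal : ∫ ω, X ω * (Y ω - EY) ∂μ
      = (∫ ω, X ω * Y ω ∂μ) - (∫ ω, X ω ∂μ) * EY := by
    have : (fun ω => X ω * (Y ω - EY)) = fun ω => X ω * Y ω - EY * X ω := by
      funext ω; ring
    rw [this, integral_sub hXYint (hXint.const_mul EY), integral_const_mul]
    ring
  rw [hfinal] at houter
  calc |(∫ ω, X ω * Y ω ∂μ) - (∫ ω, X ω ∂μ) * ∫ ω, Y ω ∂μ| ≤ 2 * a * (2 * b * q) := houter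
    _ ≤ 4 * q * a * b := by nlinarith [houter, abs_nonneg ((∫ ω, X ω * Y ω ∂μ) - (∫ ω, X ω ∂μ) * ∫ ω, Y ω ∂μ)]
end

section
/- Let X, Y1, Y2 be random variables taking values in a measurable space such that Y1 and Y2 are each q-independent of X, and Y1 and Y2 are conditionally independent given X. Then Y1 and Y2 are 2q-independent. -/
open MeasureTheory ProbabilityTheory

theorem stmt1 {Ω K : Type*} [MeasurableSpace Ω] [StandardBorelSpace Ω] [Nonempty Ω]
    [mK : MeasurableSpace K]
    (μ : Measure Ω) [IsProbabilityMeasure μ]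
    (X Y₁ Y₂ : Ω → K) (hX : Measurable X) (hY₁ : Measurable Y₁) (hY₂ : Measurable Y₂)
    (q : ℝ)
    (h1 : QIndep μ X Y₁ q) (h2 : QIndep μ X Y₂ q)
    (hm : MeasurableSpace.comap X mK ≤ ‹MeasurableSpace Ω›)
    (hci : ProbabilityTheory.CondIndepFun (MeasurableSpace.comap X mK) hm Y₁ Y₂ μ) :
    QIndep μ Y₁ Y₂ (2 * q) := by
  intro A B hA hB
  set sA := Y₁ ⁻¹' A with hsA_def
  set sB := Y₂ ⁻¹' B with hsB_def
  have hsA : MeasurableSet sA := hY₁ hA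
  have hsB : MeasurableSet sB := hY₂ hB
  set p₁ : ℝ := (μ sA).toReal with hp₁
  set p₂ : ℝ := (μ sB).toReal with hp₂
  set f : Ω → ℝ := μ⟦sA | MeasurableSpace.comap X mK⟧ with hf_def
  set g : Ω → ℝ := μ⟦sB | MeasurableSpace.comap X mK⟧ with hg_def
  have hindA : Integrable (sA.indicator fun _ => (1:ℝ)) μ :=
    (integrable_const 1).indicator hsA
  have hindB : Integrable (sB.indicator fun _ => (1:ℝ)) μ :=
    (integrable_const 1).indicator hsB
  have hf_int : Integrable f μ := integrable_condExp
  have hg_int : Integrable g μ := integrable_condExp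
  have hf_meas : StronglyMeasurable[MeasurableSpace.comap X mK] f := stronglyMeasurable_condExp
  have hg_nonneg : 0 ≤ᵐ[μ] g := condExp_nonneg (Filter.Eventually.of_forall fun ω =>
    Set.indicator_nonneg (fun _ _ => zero_le_one) ω)
  have hg_le_one : g ≤ᵐ[μ] fun _ => (1:ℝ) := by
    have h := condExp_mono (μ := μ) (m := MeasurableSpace.comap X mK) hindB
      (integrable_const (1:ℝ))
      (Filter.Eventually.of_forall fun ω => Set.indicator_le_self' (fun _ _ => zero_le_one) ω)
    rw [condExp_const hm] at h
    exact h
  -- conditional independence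
  have hkey : (μ⟦sA ∩ sB | MeasurableSpace.comap X mK⟧) =ᵐ[μ] fun ω => f ω * g ω :=
    (ProbabilityTheory.condIndepFun_iff_condExp_inter_preimage_eq_mul hY₁ hY₂).mp hci A B hA hB
  -- integrals of f and g
  have hint_f : ∫ ω, f ω ∂μ = p₁ := by
    rw [hf_def, integral_condExp hm]; exact integral_indicator_one hsA
  have hint_g : ∫ ω, g ω ∂μ = p₂ := by
    rw [hg_def, integral_condExp hm]; exact integral_indicator_one hsB
  -- the measure of the intersection equals ∫ f*g
  have hfg_int : Integrable (fun ω => f ω * g ω) μ := by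
    refine Integrable.mono' hf_int.abs
      (hf_int.aestronglyMeasurable.mul hg_int.aestronglyMeasurable) ?_
    filter_upwards [hg_nonneg, hg_le_one] with ω h0 h1'
    rw [Real.norm_eq_abs, abs_mul]
    calc |f ω| * |g ω| ≤ |f ω| * 1 := by
          apply mul_le_mul_of_nonneg_left _ (abs_nonneg _)
          rw [abs_of_nonneg h0]; exact h1'
      _ = |f ω| := mul_one _
  have hmeas_fg : (μ (sA ∩ sB)).toReal = ∫ ω, f ω * g ω ∂μ := by
    rw [← integral_congr_ae hkey, integral_condExp hm]
    exact (integral_indicator_one (hsA.inter hsB)).symm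
  -- the diff
  have hdiff : (μ (sA ∩ sB)).toReal - p₁ * p₂ = ∫ ω, (f ω - p₁) * g ω ∂μ := by
    have : (fun ω => (f ω - p₁) * g ω) = fun ω => f ω * g ω - p₁ * g ω := by
      funext ω; ring
    rw [hmeas_fg, this, integral_sub hfg_int (hg_int.const_mul p₁), integral_const_mul, hint_g]
  -- the special set S
  set S : Set Ω := {ω | p₁ ≤ f ω} with hS_def
  have hS_m : MeasurableSet[MeasurableSpace.comap X mK] S := hf_meas.measurable measurableSet_Ici
  have hS : MeasurableSet S := hm _ hS_m
  obtain ⟨A', hA', hA'eq⟩ := hS_m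
  -- ∫_t f = μ (t ∩ sA) for m-measurable t
  have hset : ∀ t : Set Ω, MeasurableSet[MeasurableSpace.comap X mK] t →
      ∫ ω in t, f ω ∂μ = (μ (t ∩ sA)).toReal := by
    intro t ht
    rw [hf_def, setIntegral_condExp hm hindA ht, setIntegral_indicator hsA,
      setIntegral_const, smul_eq_mul, mul_one, measureReal_def]
  have hfp_int : Integrable (fun ω => f ω - p₁) μ := hf_int.sub (integrable_const p₁)
  have hI : ∀ t : Set Ω, MeasurableSet[MeasurableSpace.comap X mK] t →
      ∫ ω in t, (f ω - p₁) ∂μ = (μ (t ∩ sA)).toReal - (μ t).toReal * p₁ := by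
    intro t ht
    rw [integral_sub hf_int.integrableOn (integrableOn_const (measure_ne_top μ t)),
      hset t ht, setIntegral_const, smul_eq_mul, measureReal_def]
  -- bound on ∫_S (f - p₁) via q-independence h1
  have hq1 : |∫ ω in S, (f ω - p₁) ∂μ| ≤ q := by
    rw [hI S ⟨A', hA', hA'eq⟩, ← hA'eq]
    exact h1 A' A hA' hA
  -- ∫ over all of Ω is zero
  have htotal : ∫ ω, (f ω - p₁) ∂μ = 0 := by
    rw [integral_sub hf_int (integrable_const p₁), hint_f, integral_const, probReal_univ]
    simp
  have hsplit : ∫ ω in S, (f ω - p₁) ∂μ + ∫ ω in Sᶜ, (f ω - p₁) ∂μ = 0 := by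
    rw [integral_add_compl hS hfp_int, htotal]
  -- pointwise bounds
  have hub : (fun ω => (f ω - p₁) * g ω) ≤ᵐ[μ] S.indicator (fun ω => f ω - p₁) := by
    filter_upwards [hg_nonneg, hg_le_one] with ω h0 h1'
    by_cases hωS : ω ∈ S
    · rw [Set.indicator_of_mem hωS]
      have : 0 ≤ f ω - p₁ := sub_nonneg.mpr hωS
      calc (f ω - p₁) * g ω ≤ (f ω - p₁) * 1 := mul_le_mul_of_nonneg_left h1' this
        _ = f ω - p₁ := mul_one _
    · rw [Set.indicator_of_notMem hωS]
      have : f ω - p₁ ≤ 0 := sub_nonpos.mpr (le_of_not_ge hωS)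
      exact mul_nonpos_of_nonpos_of_nonneg this h0
  have hlb : Sᶜ.indicator (fun ω => f ω - p₁) ≤ᵐ[μ] fun ω => (f ω - p₁) * g ω := by
    filter_upwards [hg_nonneg, hg_le_one] with ω h0 h1'
    by_cases hωS : ω ∈ S
    · rw [Set.indicator_of_notMem (by simpa using hωS)]
      have : 0 ≤ f ω - p₁ := sub_nonneg.mpr hωS
      exact mul_nonneg this h0
    · rw [Set.indicator_of_mem (by simpa using hωS)]
      have hneg : f ω - p₁ ≤ 0 := sub_nonpos.mpr (le_of_not_ge hωS)
      have := mul_le_mul_of_nonpos_left h1' hneg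
      simpa using this
  -- integrability of all sides
  have hlhs_int : Integrable (fun ω => (f ω - p₁) * g ω) μ := by
    refine Integrable.mono' hfp_int.abs
      (hfp_int.aestronglyMeasurable.mul hg_int.aestronglyMeasurable) ?_
    filter_upwards [hg_nonneg, hg_le_one] with ω h0 h1'
    rw [Real.norm_eq_abs, abs_mul]
    calc |f ω - p₁| * |g ω| ≤ |f ω - p₁| * 1 := by
          apply mul_le_mul_of_nonneg_left _ (abs_nonneg _)
          rw [abs_of_nonneg h0]; exact h1'
      _ = |f ω - p₁| := mul_one _
  have hub_int : Integrable (S.indicator fun ω => f ω - p₁) μ := hfp_int.indicator hS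
  have hlb_int : Integrable (Sᶜ.indicator fun ω => f ω - p₁) μ := hfp_int.indicator hS.compl
  -- final bounds
  have hq0 : 0 ≤ q := by
    have := h1 Set.univ Set.univ MeasurableSet.univ MeasurableSet.univ
    simpa using this
  have hup : ∫ ω, (f ω - p₁) * g ω ∂μ ≤ q := by
    calc ∫ ω, (f ω - p₁) * g ω ∂μ ≤ ∫ ω, S.indicator (fun ω => f ω - p₁) ω ∂μ :=
          integral_mono_ae hlhs_int hub_int hub
      _ = ∫ ω in S, (f ω - p₁) ∂μ := integral_indicator hS
      _ ≤ q := le_trans (le_abs_self _) hq1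
  have hlow : -q ≤ ∫ ω, (f ω - p₁) * g ω ∂μ := by
    have h1c : ∫ ω in Sᶜ, (f ω - p₁) ∂μ = -∫ ω in S, (f ω - p₁) ∂μ := by linarith
    calc -q ≤ -|∫ ω in S, (f ω - p₁) ∂μ| := neg_le_neg hq1
      _ ≤ -∫ ω in S, (f ω - p₁) ∂μ := neg_le_neg (le_abs_self _)
      _ = ∫ ω in Sᶜ, (f ω - p₁) ∂μ := h1c.symm
      _ = ∫ ω, Sᶜ.indicator (fun ω => f ω - p₁) ω ∂μ := (integral_indicator hS.compl).symm
      _ ≤ ∫ ω, (f ω - p₁) * g ω ∂μ := integral_mono_ae hlb_int hlhs_int hlb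
  rw [abs_le]
  constructor <;> [skip; skip] <;> rw [hdiff] <;> linarith
end

section
/- Let K ⊆ R^n be a convex body containing a Euclidean ball of radius r, and suppose the covariance matrix Σ of the uniform distribution on K is the identity matrix implies K is contained in a ball of radius n+1. Then in general the smallest eigenvalue of the covariance matrix Σ(0) of the uniform distribution over K satisfies λ_min(Σ(0)) ≥ (1/4)(r/(n+1))². -/
open MeasureTheory
open scoped RealInnerProductSpace
open scoped Matrix

/-- The uniform (normalized Lebesgue) distribution on a set `K`. -/
noncomputable def uniformMeasure {n : ℕ} (K : Set (EuclideanSpace ℝ (Fin n))) :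
    Measure (EuclideanSpace ℝ (Fin n)) :=
  (volume K)⁻¹ • volume.restrict K

/-- The mean of a measure on Euclidean space. -/
noncomputable def meanVec {n : ℕ} (μ : Measure (EuclideanSpace ℝ (Fin n))) :
    EuclideanSpace ℝ (Fin n) := ∫ x, x ∂μ

/-- The covariance bilinear form of a measure on Euclidean space. -/
noncomputable def covForm {n : ℕ} (μ : Measure (EuclideanSpace ℝ (Fin n)))
    (v w : EuclideanSpace ℝ (Fin n)) : ℝ :=
  ∫ x, ⟪x - meanVec μ, v⟫ * ⟪x - meanVec μ, w⟫ ∂μ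

namespace Stmt6Aux

variable {n : ℕ} {K : Set (EuclideanSpace ℝ (Fin n))}

lemma volK_pos (hKint : (interior K).Nonempty) : 0 < volume K :=
  Measure.measure_pos_of_nonempty_interior _ hKint

lemma volK_ne_top (hKcomp : IsCompact K) : volume K ≠ ⊤ :=
  hKcomp.measure_lt_top.ne

lemma integrable_unif (hKcomp : IsCompact K) (hKint : (interior K).Nonempty)
    {F : Type*} [NormedAddCommGroup F] [NormedSpace ℝ F]
    {f : EuclideanSpace ℝ (Fin n) → F} (hf : Continuous f) :
    Integrable f (uniformMeasure K) := by
  have h1 : Integrable f (volume.restrict K) :=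
    hf.continuousOn.integrableOn_compact hKcomp
  exact h1.smul_measure (by simp [(volK_pos hKint).ne'])

/-- pushing the uniform measure through a linear equivalence -/
lemma uniform_image (T : EuclideanSpace ℝ (Fin n) ≃ₗ[ℝ] EuclideanSpace ℝ (Fin n)) :
    uniformMeasure (⇑T '' K) = Measure.map ⇑T (uniformMeasure K) := by
  have hTc : Continuous T := by
    have h := T.toLinearMap.continuous_of_finiteDimensional; exact h
  have hdet : LinearMap.det (T : EuclideanSpace ℝ (Fin n) →ₗ[ℝ] _) ≠ 0 :=
    (LinearEquiv.isUnit_det' T).ne_zero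
  set d : ENNReal := ENNReal.ofReal |LinearMap.det (T : EuclideanSpace ℝ (Fin n) →ₗ[ℝ] _)| with hd
  have hd0 : d ≠ 0 := by
    simp only [hd, ne_eq, ENNReal.ofReal_eq_zero, not_le]
    exact abs_pos.2 hdet
  have hdt : d ≠ ⊤ := ENNReal.ofReal_ne_top
  have himg : ∀ s : Set (EuclideanSpace ℝ (Fin n)), volume (⇑T '' s) = d * volume s := fun s => by
    simpa [hd] using Measure.addHaar_image_linearMap volume
      (T : EuclideanSpace ℝ (Fin n) →ₗ[ℝ] _) s
  refine Measure.ext fun s hs => ?_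
  rw [Measure.map_apply hTc.measurable hs]
  simp only [uniformMeasure, Measure.smul_apply, Measure.restrict_apply hs, smul_eq_mul,
    Measure.restrict_apply (hTc.measurable hs)]
  have key : s ∩ ⇑T '' K = ⇑T '' (⇑T ⁻¹' s ∩ K) := by
    rw [Set.image_inter T.injective, Set.image_preimage_eq _ T.surjective]
  rw [key, himg, himg, ENNReal.mul_inv (Or.inl hd0) (Or.inl hdt), mul_comm d⁻¹, mul_assoc,
    ← mul_assoc d⁻¹ d, ENNReal.inv_mul_cancel hd0 hdt, one_mul]

lemma meanVec_map (μ : Measure (EuclideanSpace ℝ (Fin n)))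
    (hint : Integrable (fun x => x) μ) (T : EuclideanSpace ℝ (Fin n) →L[ℝ] EuclideanSpace ℝ (Fin n)) :
    meanVec (Measure.map ⇑T μ) = T (meanVec μ) := by
  rw [meanVec, integral_map (φ := ⇑T) (f := fun x => x) T.continuous.aemeasurable
    continuous_id.aestronglyMeasurable]
  exact T.integral_comp_comm hint

lemma covForm_map (μ : Measure (EuclideanSpace ℝ (Fin n)))
    (hint : Integrable (fun x => x) μ)
    (T : EuclideanSpace ℝ (Fin n) →L[ℝ] EuclideanSpace ℝ (Fin n))
    (hT : ∀ x y, ⟪T x, y⟫ = ⟪x, T y⟫) (v w : EuclideanSpace ℝ (Fin n)) :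
    covForm (Measure.map ⇑T μ) v w = covForm μ (T v) (T w) := by
  have hc : Continuous fun x : EuclideanSpace ℝ (Fin n) =>
      ⟪x - T (meanVec μ), v⟫ * ⟪x - T (meanVec μ), w⟫ :=
    ((continuous_id.sub continuous_const).inner continuous_const).mul
      ((continuous_id.sub continuous_const).inner continuous_const)
  rw [covForm, meanVec_map μ hint T, integral_map T.continuous.aemeasurable
    hc.aestronglyMeasurable]
  unfold covForm
  congr 1
  ext x
  rw [← map_sub, hT, hT]

/-- The covariance matrix of the uniform measure on `K`. -/
noncomputable def covMatrix (K : Set (EuclideanSpace ℝ (Fin n))) : Matrix (Fin n) (Fin n) ℝ :=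
  fun i j => ∫ x, (x - meanVec (uniformMeasure K)) i * (x - meanVec (uniformMeasure K)) j
    ∂(uniformMeasure K)

lemma covForm_eq_matrix (hKcomp : IsCompact K) (hKint : (interior K).Nonempty)
    (v w : EuclideanSpace ℝ (Fin n)) :
    covForm (uniformMeasure K) v w = ⟪v, Matrix.toEuclideanLin (covMatrix K) w⟫ := by
  classical
  set μ := uniformMeasure K with hμ
  set m := meanVec μ with hm
  have hcont : ∀ i : Fin n, Continuous fun x : EuclideanSpace ℝ (Fin n) => (x - m) i :=
    fun i => (EuclideanSpace.proj i).continuous.comp (continuous_id.sub continuous_const)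
  have hint : ∀ i j : Fin n,
      Integrable (fun x => v i * w j * ((x - m) i * (x - m) j)) μ :=
    fun i j => integrable_unif hKcomp hKint (continuous_const.mul ((hcont i).mul (hcont j)))
  have step1 : covForm μ v w
      = ∫ x, ∑ i : Fin n, ∑ j : Fin n, v i * w j * ((x - m) i * (x - m) j) ∂μ := by
    unfold covForm
    congr 1 with x
    simp only [PiLp.inner_apply, RCLike.inner_apply, conj_trivial, ← hm, ← hμ]
    rw [Finset.sum_mul_sum]
    exact Finset.sum_congr rfl fun i _ => Finset.sum_congr rfl fun j _ => by ring
  rw [step1, integral_finset_sum _ fun i _ => integrable_finset_sum _ fun j _ => hint i j]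
  have step2 : ∀ i : Fin n, (∫ x, ∑ j : Fin n, v i * w j * ((x - m) i * (x - m) j) ∂μ)
      = ∑ j : Fin n, v i * w j * covMatrix K i j := by
    intro i
    rw [integral_finset_sum _ fun j _ => hint i j]
    refine Finset.sum_congr rfl fun j _ => ?_
    rw [integral_const_mul]
    rfl
  simp only [step2]
  simp only [PiLp.inner_apply, RCLike.inner_apply, conj_trivial]
  refine Finset.sum_congr rfl fun i _ => ?_
  have hcoord : (Matrix.toEuclideanLin (covMatrix K) w) i
      = ∑ j : Fin n, covMatrix K i j * w j := rfl
  rw [hcoord, Finset.sum_mul]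
  exact Finset.sum_congr rfl fun j _ => by ring

lemma covForm_self_nonneg (μ : Measure (EuclideanSpace ℝ (Fin n)))
    (v : EuclideanSpace ℝ (Fin n)) : 0 ≤ covForm μ v v :=
  integral_nonneg fun _ => mul_self_nonneg _

lemma covForm_self_pos (hKcomp : IsCompact K) (hKint : (interior K).Nonempty)
    {c : EuclideanSpace ℝ (Fin n)} {r : ℝ} (hr : 0 < r)
    (hball : Metric.closedBall c r ⊆ K) {v : EuclideanSpace ℝ (Fin n)} (hv : v ≠ 0) :
    0 < covForm (uniformMeasure K) v v := by
  set μ := uniformMeasure K with hμ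
  set m := meanVec μ with hm
  set f : EuclideanSpace ℝ (Fin n) → ℝ := fun x => ⟪x - m, v⟫ with hf
  have hfc : Continuous f := (continuous_id.sub continuous_const).inner continuous_const
  refine lt_of_le_of_ne (covForm_self_nonneg μ v) fun h0 => ?_
  have hint : Integrable (fun x => f x * f x) μ := integrable_unif hKcomp hKint (hfc.mul hfc)
  have hae : (fun x => f x * f x) =ᵐ[μ] 0 :=
    (integral_eq_zero_iff_of_nonneg (fun _ => mul_self_nonneg _) hint).1 h0.symm
  have hc0 : (volume K)⁻¹ ≠ 0 := by
    simp [volK_ne_top hKcomp]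
  have hae2 : (fun x => f x * f x) =ᵐ[volume.restrict K] 0 := by
    rw [hμ, uniformMeasure] at hae
    exact ae_iff.2 (by
      have h := ae_iff.1 hae
      rwa [Measure.smul_apply, smul_eq_mul, mul_eq_zero, or_iff_right hc0] at h)
  -- the set where f is nonzero has measure zero inside K
  have hNmeas : MeasurableSet {x : EuclideanSpace ℝ (Fin n) | f x ≠ 0} :=
    (isOpen_compl_iff.2 (isClosed_eq hfc continuous_const)).measurableSet
  have hNK : volume ({x : EuclideanSpace ℝ (Fin n) | f x ≠ 0} ∩ K) = 0 := by
    have h' : ∀ᵐ x ∂volume.restrict K, f x = 0 :=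
      hae2.mono fun x hx => by simpa [mul_self_eq_zero] using hx
    have h'' := ae_iff.1 h'
    rwa [Measure.restrict_apply hNmeas] at h''
  -- the zero set of f is contained in a hyperplane of measure zero
  have hW : volume (↑(ℝ ∙ v)ᗮ : Set (EuclideanSpace ℝ (Fin n))) = 0 := by
    refine Measure.addHaar_submodule volume _ fun htop => ?_
    have : v ∈ (ℝ ∙ v)ᗮ := by rw [htop]; trivial
    rw [Submodule.mem_orthogonal_singleton_iff_inner_right] at this
    exact hv (inner_self_eq_zero.1 this)
  have hZ : volume {x : EuclideanSpace ℝ (Fin n) | f x = 0} = 0 := by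
    have hset : {x : EuclideanSpace ℝ (Fin n) | f x = 0}
        = (fun x => x + (-m)) ⁻¹' (↑(ℝ ∙ v)ᗮ : Set (EuclideanSpace ℝ (Fin n))) := by
      ext x
      simp only [Set.mem_setOf_eq, Set.mem_preimage, SetLike.mem_coe,
        Submodule.mem_orthogonal_singleton_iff_inner_left]
      rw [hf, ← sub_eq_add_neg]
    rw [hset, measure_preimage_add_right]
    exact hW
  -- but the ball has positive measure
  have hsub : Metric.closedBall c r ⊆
      {x : EuclideanSpace ℝ (Fin n) | f x = 0} ∪ ({x | f x ≠ 0} ∩ K) := by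
    intro x hx
    by_cases h : f x = 0
    · exact Or.inl h
    · exact Or.inr ⟨h, hball hx⟩
  have : volume (Metric.closedBall c r) = 0 := by
    refine le_antisymm ?_ zero_le
    calc volume (Metric.closedBall c r)
        ≤ volume ({x : EuclideanSpace ℝ (Fin n) | f x = 0} ∪ ({x | f x ≠ 0} ∩ K)) :=
          measure_mono hsub
      _ ≤ volume {x : EuclideanSpace ℝ (Fin n) | f x = 0} + volume ({x | f x ≠ 0} ∩ K) :=
          measure_union_le _ _
      _ = 0 := by rw [hZ, hNK, add_zero]
  exact absurd this (Metric.measure_closedBall_pos volume c hr).ne'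

end Stmt6Aux

set_option maxHeartbeats 1000000 in
theorem stmt6 (n : ℕ) (r : ℝ) (hr : 0 < r)
    (K : Set (EuclideanSpace ℝ (Fin n)))
    (hKconv : Convex ℝ K) (hKcomp : IsCompact K) (hKint : (interior K).Nonempty)
    (c : EuclideanSpace ℝ (Fin n)) (hball : Metric.closedBall c r ⊆ K)
    -- the Kannan–Lovász–Simonovits theorem, taken as a hypothesis:
    (hKLS : ∀ K' : Set (EuclideanSpace ℝ (Fin n)), Convex ℝ K' → IsCompact K' →
      (interior K').Nonempty →
      (∀ v w, covForm (uniformMeasure K') v w = ⟪v, w⟫) →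
      ∃ c', K' ⊆ Metric.closedBall c' (n + 1)) :
    ∀ v, (1 / 4) * (r / (n + 1)) ^ 2 * ‖v‖ ^ 2 ≤ covForm (uniformMeasure K) v v := by
  classical
  intro v
  set μ := uniformMeasure K with hμdef
  have hid : Integrable (fun x : EuclideanSpace ℝ (Fin n) => x) μ :=
    Stmt6Aux.integrable_unif hKcomp hKint continuous_id
  have hnonneg := Stmt6Aux.covForm_self_nonneg μ v
  by_cases hv : v = 0
  · simpa [hv] using hnonneg
  set M := Stmt6Aux.covMatrix K with hMdef
  have hrepr : ∀ a b : EuclideanSpace ℝ (Fin n),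
      covForm μ a b = ⟪a, Matrix.toEuclideanLin M b⟫ :=
    fun a b => Stmt6Aux.covForm_eq_matrix hKcomp hKint a b
  -- M is positive definite
  have hMposdef : M.PosDef := by
    refine Matrix.PosDef.of_dotProduct_mulVec_pos ?_ ?_
    · ext i j
      simp only [Matrix.conjTranspose_apply, star_trivial, hMdef, Stmt6Aux.covMatrix]
      congr 1 with x
      ring
    · intro x hx
      have hvx : ((WithLp.equiv 2 (Fin n → ℝ)).symm x : EuclideanSpace ℝ (Fin n)) ≠ 0 := by
        simpa using hx
      have hpos := Stmt6Aux.covForm_self_pos hKcomp hKint hr hball hvx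
      rw [hrepr] at hpos
      simpa [PiLp.inner_apply, dotProduct, mul_comm] using hpos
  have hdetM : IsUnit M.det := isUnit_iff_ne_zero.2 hMposdef.det_pos.ne'
  have hMinv : (M⁻¹).PosDef := hMposdef.inv
  set S := (open scoped MatrixOrder in CFC.sqrt (M⁻¹)) with hSdef
  have hSps : S.PosSemidef := open scoped MatrixOrder in
    Matrix.nonneg_iff_posSemidef.1 (CFC.sqrt_nonneg (M⁻¹))
  have hSherm : Sᴴ = S := hSps.1
  have hSS : S * S = M⁻¹ :=
    open scoped MatrixOrder in CFC.sqrt_mul_sqrt_self (M⁻¹) hMinv.posSemidef.nonneg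
  have hdetS : IsUnit S.det := by
    refine isUnit_iff_ne_zero.2 fun h => ?_
    have h2 : S.det * S.det = (M⁻¹).det := by rw [← Matrix.det_mul, hSS]
    rw [h, mul_zero] at h2
    exact hMinv.det_pos.ne' h2.symm
  have hMinvinv : M⁻¹⁻¹ = M := Matrix.nonsing_inv_nonsing_inv M hdetM
  have hMeq : M = S⁻¹ * S⁻¹ := by rw [← hMinvinv, ← hSS, Matrix.mul_inv_rev]
  have hSMS : S * M * S = 1 := by
    rw [hMeq, Matrix.mul_assoc, Matrix.mul_assoc, Matrix.nonsing_inv_mul S hdetS,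
      Matrix.mul_one, Matrix.mul_nonsing_inv S hdetS]
  have hSinvherm : (S⁻¹)ᴴ = S⁻¹ := by rw [Matrix.conjTranspose_nonsing_inv, hSherm]
  -- the linear maps
  set Tl := Matrix.toEuclideanLin S with hTl
  set Tl' := Matrix.toEuclideanLin S⁻¹ with hTl'
  have hcomp : ∀ (A B : Matrix (Fin n) (Fin n) ℝ) (x : EuclideanSpace ℝ (Fin n)),
      Matrix.toEuclideanLin A (Matrix.toEuclideanLin B x)
        = Matrix.toEuclideanLin (A * B) x := by
    intro A B x
    simp [Matrix.toEuclideanLin_apply, Matrix.mulVec_mulVec]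
  have hone : ∀ x : EuclideanSpace ℝ (Fin n), Matrix.toEuclideanLin (1 : Matrix (Fin n) (Fin n) ℝ) x = x := by
    intro x
    simp [Matrix.toEuclideanLin_apply, Matrix.one_mulVec]
  have hTlinv1 : ∀ x, Tl (Tl' x) = x := by
    intro x
    rw [hTl, hTl', hcomp, Matrix.mul_nonsing_inv S hdetS, hone]
  have hTlinv2 : ∀ x, Tl' (Tl x) = x := by
    intro x
    rw [hTl, hTl', hcomp, Matrix.nonsing_inv_mul S hdetS, hone]
  set T : EuclideanSpace ℝ (Fin n) ≃ₗ[ℝ] EuclideanSpace ℝ (Fin n) :=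
    LinearEquiv.ofLinear Tl Tl' (LinearMap.ext hTlinv1) (LinearMap.ext hTlinv2) with hT
  have hTapp : ∀ x, T x = Tl x := fun _ => rfl
  -- adjoint facts
  have hadj : ∀ (A : Matrix (Fin n) (Fin n) ℝ) (x y : EuclideanSpace ℝ (Fin n)),
      ⟪Matrix.toEuclideanLin A x, y⟫ = ⟪x, Matrix.toEuclideanLin Aᴴ y⟫ := by
    intro A x y
    rw [Matrix.toEuclideanLin_conjTranspose_eq_adjoint, LinearMap.adjoint_inner_right]
  have hTsa : ∀ x y, ⟪Tl x, y⟫ = ⟪x, Tl y⟫ := by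
    intro x y
    rw [hTl, hadj, hSherm]
  -- the transformed body
  set K' := ⇑T '' K with hK'
  have hTcont : Continuous ⇑T := (Tl.continuous_of_finiteDimensional : Continuous ⇑Tl)
  have hK'conv : Convex ℝ K' := by
    have := hKconv.linear_image (T : EuclideanSpace ℝ (Fin n) →ₗ[ℝ] EuclideanSpace ℝ (Fin n))
    simpa using this
  have hK'comp : IsCompact K' := hKcomp.image hTcont
  have hK'int : (interior K').Nonempty := by
    obtain ⟨x, hx⟩ := hKint
    have hfun2 : ⇑T.toContinuousLinearEquiv.toHomeomorph = ⇑T := rfl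
    refine ⟨T x, ?_⟩
    rw [hK', ← hfun2, ← T.toContinuousLinearEquiv.toHomeomorph.image_interior]
    exact ⟨x, hx, rfl⟩
  -- covariance of the transformed body is the identity
  set Tc : EuclideanSpace ℝ (Fin n) →L[ℝ] EuclideanSpace ℝ (Fin n) :=
    { toLinearMap := Tl, cont := hTcont } with hTc
  have hTcfun : ⇑Tc = ⇑T := rfl
  have hcov' : ∀ a b, covForm (uniformMeasure K') a b = ⟪a, b⟫ := by
    intro a b
    rw [hK', Stmt6Aux.uniform_image T, ← hμdef, ← hTcfun,
      Stmt6Aux.covForm_map μ hid Tc hTsa a b]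
    have : covForm μ (Tc a) (Tc b) = ⟪Tl a, Matrix.toEuclideanLin M (Tl b)⟫ := hrepr _ _
    rw [this, hTl, hadj, hSherm, hcomp, hcomp, hSMS, hone]
  obtain ⟨c', hc'⟩ := hKLS K' hK'conv hK'comp hK'int hcov'
  -- norm bound on Tl
  have hn1 : (0:ℝ) < (n:ℝ) + 1 := by positivity
  have hTbnd : ∀ u : EuclideanSpace ℝ (Fin n), ‖Tl u‖ ≤ (((n:ℝ) + 1) / r) * ‖u‖ := by
    intro u
    rcases eq_or_ne u 0 with rfl | hu
    · simp
    have hnu : (0:ℝ) < ‖u‖ := norm_pos_iff.2 hu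
    set u' : EuclideanSpace ℝ (Fin n) := (r / ‖u‖) • u with hu'
    have hnu' : ‖u'‖ = r := by
      rw [hu', norm_smul, Real.norm_eq_abs, abs_of_pos (by positivity), div_mul_cancel₀ _ hnu.ne']
    have h1 : c + u' ∈ Metric.closedBall c r := by
      rw [Metric.mem_closedBall, dist_eq_norm, add_sub_cancel_left, hnu']
    have h2 : c - u' ∈ Metric.closedBall c r := by
      rw [Metric.mem_closedBall, dist_eq_norm, sub_sub_cancel_left, norm_neg, hnu']
    have hx1 : T (c + u') ∈ Metric.closedBall c' ((n:ℝ) + 1) := by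
      exact_mod_cast hc' ⟨_, hball h1, rfl⟩
    have hx2 : T (c - u') ∈ Metric.closedBall c' ((n:ℝ) + 1) := by
      exact_mod_cast hc' ⟨_, hball h2, rfl⟩
    rw [Metric.mem_closedBall, dist_eq_norm] at hx1 hx2
    have hdiff : T (c + u') - T (c - u') = Tl u' + Tl u' := by
      rw [hTapp, hTapp, ← map_sub]
      have : (c + u') - (c - u') = u' + u' := by abel
      rw [this, map_add]
    have hb : ‖Tl u' + Tl u'‖ ≤ 2 * ((n:ℝ) + 1) := by
      rw [← hdiff]
      calc ‖T (c + u') - T (c - u')‖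
          ≤ ‖T (c + u') - c'‖ + ‖c' - T (c - u')‖ := norm_sub_le_norm_sub_add_norm_sub _ _ _
        _ ≤ ((n:ℝ) + 1) + ((n:ℝ) + 1) := by
            refine add_le_add hx1 ?_
            rw [norm_sub_rev]; exact hx2
        _ = 2 * ((n:ℝ) + 1) := by ring
    have hTu' : ‖Tl u'‖ ≤ (n:ℝ) + 1 := by
      have : ‖Tl u' + Tl u'‖ = 2 * ‖Tl u'‖ := by
        rw [← two_smul ℝ, norm_smul]; simp
      rw [this] at hb
      linarith
    have hTu'2 : ‖Tl u'‖ = (r / ‖u‖) * ‖Tl u‖ := by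
      rw [hu', Tl.map_smul, norm_smul, Real.norm_eq_abs, abs_of_pos (by positivity)]
    rw [hTu'2] at hTu'
    have hmain : r * ‖Tl u‖ ≤ ((n:ℝ) + 1) * ‖u‖ := by
      rw [div_mul_eq_mul_div, div_le_iff₀ hnu] at hTu'
      linarith
    rw [div_mul_eq_mul_div, le_div_iff₀ hr]
    linarith
  -- conclude
  set w : EuclideanSpace ℝ (Fin n) := Tl' v with hw
  have hww : ‖w‖ ^ 2 = covForm μ v v := by
    rw [hrepr v v, ← real_inner_self_eq_norm_sq, hw, hTl', hadj, hSinvherm, hcomp, ← hMeq]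
  have hTlw : Tl w = v := hTlinv1 v
  have hv2 : ‖v‖ ^ 2 = ⟪w, Tl v⟫ := by
    rw [← real_inner_self_eq_norm_sq, ← hTsa w v, hTlw]
  have hCS : ‖v‖ ^ 2 ≤ ‖w‖ * ((((n:ℝ) + 1) / r) * ‖v‖) := by
    rw [hv2]
    calc ⟪w, Tl v⟫ ≤ ‖w‖ * ‖Tl v‖ := real_inner_le_norm _ _
      _ ≤ ‖w‖ * ((((n:ℝ) + 1) / r) * ‖v‖) :=
          mul_le_mul_of_nonneg_left (hTbnd v) (norm_nonneg _)
  have hnv : (0:ℝ) < ‖v‖ := norm_pos_iff.2 hv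
  have hwnn : (0:ℝ) ≤ ‖w‖ := norm_nonneg _
  have hkey : ‖v‖ ≤ ‖w‖ * (((n:ℝ) + 1) / r) := by
    have := hCS
    nlinarith
  have hsq : ‖v‖ ^ 2 ≤ ‖w‖ ^ 2 * (((n:ℝ) + 1) / r) ^ 2 := by
    have h1 : (0:ℝ) ≤ ‖w‖ * (((n:ℝ) + 1) / r) := by positivity
    nlinarith
  rw [← hww]
  have hratio : (((n:ℝ) + 1) / r) ^ 2 * (r / ((n:ℝ) + 1)) ^ 2 = 1 := by
    field_simp
  nlinarith [sq_nonneg (‖w‖), sq_nonneg (r / ((n:ℝ)+1)), mul_le_mul_of_nonneg_right hsq (sq_nonneg (r / ((n:ℝ)+1)))]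
end

section
/- Let Σ and Σ̂ be symmetric invertible n×n matrices such that (1−ε) v^⊤Σ̂v ≤ v^⊤Σv ≤ (1+ε) v^⊤Σ̂v for all v ∈ R^n, where 0 ≤ ε < (√5 − 1)/2. Then for all u ∈ R^n: (1 − (2ε² + ε)/(1 + ε² + ε)) u^⊤Σ̂^{-1}u ≤ u^⊤Σ^{-1}u ≤ (1 + (2ε² + 3ε)/(1 − ε² − ε)) u^⊤Σ̂^{-1}u. -/
open Matrix

private lemma symm_swap {n : ℕ} {A : Matrix (Fin n) (Fin n) ℝ} (hA : A.IsSymm)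
    (x y : Fin n → ℝ) : x ⬝ᵥ A.mulVec y = y ⬝ᵥ A.mulVec x := by
  rw [Matrix.dotProduct_mulVec, ← Matrix.mulVec_transpose, hA.eq, dotProduct_comm]

private lemma mat_inv_apply {n : ℕ} {A : Matrix (Fin n) (Fin n) ℝ} (h : IsUnit A.det)
    (u : Fin n → ℝ) : A.mulVec (A⁻¹.mulVec u) = u := by
  rw [Matrix.mulVec_mulVec, Matrix.mul_nonsing_inv _ h, Matrix.one_mulVec]

/-- key inequality: 2⟨u,w⟩ - ⟨w,Aw⟩ ≤ ⟨u,A⁻¹u⟩ -/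
private lemma lemB {n : ℕ} {A : Matrix (Fin n) (Fin n) ℝ} (hA : A.IsSymm)
    (hdet : IsUnit A.det) (hpos : ∀ x : Fin n → ℝ, 0 ≤ x ⬝ᵥ A.mulVec x)
    (u w : Fin n → ℝ) : 2 * (u ⬝ᵥ w) - w ⬝ᵥ A.mulVec w ≤ u ⬝ᵥ A⁻¹.mulVec u := by
  set v := A⁻¹.mulVec u with hv
  have hAv : A.mulVec v = u := mat_inv_apply hdet u
  have h0 := hpos (w - v)
  have hexp : (w - v) ⬝ᵥ A.mulVec (w - v)
      = w ⬝ᵥ A.mulVec w - 2 * (u ⬝ᵥ w) + u ⬝ᵥ v := by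
    rw [Matrix.mulVec_sub, dotProduct_sub, sub_dotProduct, sub_dotProduct,
      symm_swap hA v w, hAv]
    rw [dotProduct_comm v u, dotProduct_comm w u]
    ring
  linarith

private lemma eq_of_quad {n : ℕ} {A B : Matrix (Fin n) (Fin n) ℝ} (hA : A.IsSymm)
    (hB : B.IsSymm) (h : ∀ v : Fin n → ℝ, v ⬝ᵥ A.mulVec v = v ⬝ᵥ B.mulVec v) :
    A = B := by
  have hD : (A - B).IsSymm := hA.sub hB
  have hq : ∀ v : Fin n → ℝ, v ⬝ᵥ (A - B).mulVec v = 0 := by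
    intro v; simp [Matrix.sub_mulVec, dotProduct_sub, h v]
  have hz : A - B = 0 := by
    ext i j
    have h1 := hq (Pi.single i 1 + Pi.single j 1)
    have h2 := hq (Pi.single i 1)
    have h3 := hq (Pi.single j 1)
    have hsym : (A - B) j i = (A - B) i j := by
      have := congrFun (congrFun hD.eq i) j
      simpa [Matrix.transpose_apply] using this
    simp only [Matrix.mulVec_add, dotProduct_add, add_dotProduct,
      Matrix.mulVec_single, single_dotProduct] at h1 h2 h3
    simp only [Matrix.zero_apply]
    simp only [mul_one, one_mul, MulOpposite.op_one, one_smul, Matrix.col_apply] at *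
    have goal : (A - B) i j = 0 := by
      by_cases hij : i = j
      · subst hij; simpa using h2
      · linarith
    exact goal
  have := sub_eq_zero.mp hz
  exact this

theorem stmt10 (n : ℕ) (ε : ℝ) (hε0 : 0 ≤ ε) (hε : ε < (Real.sqrt 5 - 1) / 2)
    (S Shat : Matrix (Fin n) (Fin n) ℝ)
    (hS : S.IsSymm) (hShat : Shat.IsSymm)
    (hSinv : IsUnit S.det) (hShatinv : IsUnit Shat.det)
    (hband : ∀ v : Fin n → ℝ,
      (1 - ε) * (v ⬝ᵥ Shat.mulVec v) ≤ v ⬝ᵥ S.mulVec v ∧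
        v ⬝ᵥ S.mulVec v ≤ (1 + ε) * (v ⬝ᵥ Shat.mulVec v)) :
    ∀ u : Fin n → ℝ,
      (1 - (2 * ε ^ 2 + ε) / (1 + ε ^ 2 + ε)) * (u ⬝ᵥ Shat⁻¹.mulVec u) ≤ u ⬝ᵥ S⁻¹.mulVec u ∧
        u ⬝ᵥ S⁻¹.mulVec u ≤ (1 + (2 * ε ^ 2 + 3 * ε) / (1 - ε ^ 2 - ε)) * (u ⬝ᵥ Shat⁻¹.mulVec u) := by
  intro u
  have h5 : Real.sqrt 5 ^ 2 = 5 := Real.sq_sqrt (by norm_num)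
  have h5n : 0 ≤ Real.sqrt 5 := Real.sqrt_nonneg 5
  have hlt1 : ε ^ 2 + ε < 1 := by nlinarith
  have hden1 : (0:ℝ) < 1 + ε ^ 2 + ε := by nlinarith
  have hden2 : (0:ℝ) < 1 - ε ^ 2 - ε := by linarith
  have h1e : (0:ℝ) < 1 - ε := by nlinarith
  have h1e' : (0:ℝ) < 1 + ε := by linarith
  rcases eq_or_lt_of_le hε0 with h0 | hpos
  · -- ε = 0 case : S = Shat
    have hSeq : S = Shat := by
      apply eq_of_quad hS hShat
      intro v
      have h1 := (hband v).1
      have h2 := (hband v).2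
      rw [← h0] at h1 h2
      linarith
    rw [hSeq, ← h0]
    norm_num
  · -- ε > 0 case
    have hShpos : ∀ x : Fin n → ℝ, 0 ≤ x ⬝ᵥ Shat.mulVec x := by
      intro x; have h1 := (hband x).1; have h2 := (hband x).2; nlinarith
    have hSpos : ∀ x : Fin n → ℝ, 0 ≤ x ⬝ᵥ S.mulVec x := by
      intro x; have h1 := (hband x).1; nlinarith [hShpos x]
    set q := u ⬝ᵥ S⁻¹.mulVec u with hqdef
    set qh := u ⬝ᵥ Shat⁻¹.mulVec u with hqhdef
    have hqh0 : 0 ≤ qh := by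
      have := lemB hShat hShatinv hShpos u 0
      simpa using this
    -- upper bound: q ≤ qh / (1 - ε)
    have hupper : q * (1 - ε) ≤ qh := by
      set v := S⁻¹.mulVec u with hvdef
      have hAv : S.mulVec v = u := mat_inv_apply hSinv u
      have hq_eq : q = 2 * (u ⬝ᵥ v) - v ⬝ᵥ S.mulVec v := by
        rw [hAv, dotProduct_comm v u, hqdef]; ring
      have hball := (hband v).1
      have hB := lemB hShat hShatinv hShpos u ((1 - ε) • v)
      simp only [smul_dotProduct, dotProduct_smul, Matrix.mulVec_smul, smul_eq_mul] at hB
      nlinarith [hB, hball, h1e, hq_eq]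
    -- lower bound: qh ≤ q * (1 + ε)
    have hlower : qh ≤ q * (1 + ε) := by
      set w := (1 / (1 + ε)) • Shat⁻¹.mulVec u with hwdef
      have hB := lemB hS hSinv hSpos u w
      have hband2 := (hband w).2
      have hkey : (Shat⁻¹.mulVec u) ⬝ᵥ Shat.mulVec (Shat⁻¹.mulVec u) = qh := by
        rw [mat_inv_apply hShatinv, dotProduct_comm, hqhdef]
      simp only [hwdef, smul_dotProduct, dotProduct_smul, Matrix.mulVec_smul,
        smul_eq_mul] at hB hband2
      rw [hkey] at hband2
      rw [← hqdef, ← hqhdef] at hB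
      have comb : 2 * (1 / (1 + ε) * qh) - (1 + ε) * (1 / (1 + ε) * (1 / (1 + ε) * qh)) ≤ q := by
        linarith
      have key2 : (2 * (1 / (1 + ε) * qh) - (1 + ε) * (1 / (1 + ε) * (1 / (1 + ε) * qh)))
          * (1 + ε) = qh := by
        field_simp
        ring
      have hmul := mul_le_mul_of_nonneg_right comb h1e'.le
      linarith
    constructor
    · -- lower conclusion
      have e1 : 1 - (2 * ε ^ 2 + ε) / (1 + ε ^ 2 + ε) = (1 - ε ^ 2) / (1 + ε ^ 2 + ε) := by
        field_simp; ring
      have hd0 : 0 ≤ 1 - (2 * ε ^ 2 + ε) / (1 + ε ^ 2 + ε) := by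
        rw [e1]; exact div_nonneg (by nlinarith) hden1.le
      have hc1 : (1 - (2 * ε ^ 2 + ε) / (1 + ε ^ 2 + ε)) * (1 + ε) ≤ 1 := by
        rw [e1, div_mul_eq_mul_div, div_le_one hden1]; nlinarith
      have hq0 : 0 ≤ q := by nlinarith
      nlinarith [mul_le_mul_of_nonneg_left hlower hd0,
        mul_le_mul_of_nonneg_right hc1 hq0]
    · -- upper conclusion
      have e2 : 1 + (2 * ε ^ 2 + 3 * ε) / (1 - ε ^ 2 - ε)
          = (1 + 2 * ε + ε ^ 2) / (1 - ε ^ 2 - ε) := by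
        field_simp; ring
      have hC : 1 / (1 - ε) ≤ 1 + (2 * ε ^ 2 + 3 * ε) / (1 - ε ^ 2 - ε) := by
        rw [e2, div_le_div_iff₀ h1e hden2]; nlinarith
      have step : q ≤ (1 / (1 - ε)) * qh := by
        rw [one_div_mul_eq_div, le_div_iff₀ h1e]
        exact hupper
      calc q ≤ (1 / (1 - ε)) * qh := step
        _ ≤ (1 + (2 * ε ^ 2 + 3 * ε) / (1 - ε ^ 2 - ε)) * qh :=
          mul_le_mul_of_nonneg_right hC hqh0
end
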